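/- Assume the misclassified probability mass satisfies Σ_{t∈R̂∩G} P(t) + Σ_{t∈Ĝ∩R} P(t) ≤ ε₁ with 0 ≤ ε₁ < 1, and |δ − δ̂| ≤ ε₂ with ε₂ ≥ 0. Then max{ |1/A − 1| , |e^{δ−δ̂}/A − 1| } ≤ f₁(ε₁, ε₂). -/
import Mathlib


open Finset

set_option maxHeartbeats 1000000

private lemma aux_one_div_bound (B L U : ℝ) (hL : 0 < L) (h1 : L ≤ B) (h2 : B ≤ U) :
    |1 / B - 1| ≤ max (1 / L - 1) (1 - 1 / U) := by
  have hB : 0 < B := hL.trans_le h1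
  have hU : 0 < U := hB.trans_le h2
  have hBL : 1 / B ≤ 1 / L := one_div_le_one_div_of_le hL h1
  have hUB : 1 / U ≤ 1 / B := one_div_le_one_div_of_le hB h2
  rw [abs_le]
  constructor
  · have h := le_max_right (1 / L - 1) (1 - 1 / U)
    linarith
  · have h := le_max_left (1 / L - 1) (1 - 1 / U)
    linarith

/-- Bound on the same-list multiplicative deviation by `f₁(ε₁, ε₂)`. -/
theorem same_list_deviation_bound
    {V : Type*} [Fintype V] [DecidableEq V]
    (P : V → ℝ) (G Ghat : Finset V) (δ δhat : ℝ)
    (hP0 : ∀ t, 0 ≤ P t) (hP1 : ∑ t, P t = 1) (hδ : 0 < δ) (hδhat : 0 < δhat)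
    (A : ℝ)
    (hA : A = ∑ t ∈ Ghatᶜ ∩ Gᶜ, P t + Real.exp δ * ∑ t ∈ Ghatᶜ ∩ G, P t
        + Real.exp (-δhat) * ∑ t ∈ Ghat ∩ Gᶜ, P t
        + Real.exp (δ - δhat) * ∑ t ∈ Ghat ∩ G, P t)
    (ε₁ ε₂ : ℝ) (hε₁0 : 0 ≤ ε₁) (hε₁1 : ε₁ < 1) (hε₂0 : 0 ≤ ε₂)
    (hmis : ∑ t ∈ Ghatᶜ ∩ G, P t + ∑ t ∈ Ghat ∩ Gᶜ, P t ≤ ε₁)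
    (hδδ : |δ - δhat| ≤ ε₂) :
    max |1 / A - 1| |Real.exp (δ - δhat) / A - 1|
      ≤ max (Real.exp (2 * ε₂) / (1 - ε₁) - 1)
          (1 - Real.exp (-(2 * ε₂)) / ((1 - ε₁) + ε₁ * Real.exp (δ - ε₂))) := by
  set a := ∑ t ∈ Ghatᶜ ∩ Gᶜ, P t with ha_def
  set b := ∑ t ∈ Ghatᶜ ∩ G, P t with hb_def
  set c := ∑ t ∈ Ghat ∩ Gᶜ, P t with hc_def
  set d := ∑ t ∈ Ghat ∩ G, P t with hd_def
  have ha0 : 0 ≤ a := Finset.sum_nonneg fun t _ => hP0 t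
  have hb0 : 0 ≤ b := Finset.sum_nonneg fun t _ => hP0 t
  have hc0 : 0 ≤ c := Finset.sum_nonneg fun t _ => hP0 t
  have hd0 : 0 ≤ d := Finset.sum_nonneg fun t _ => hP0 t
  have hsplit : ∀ s : Finset V, ∑ t ∈ s ∩ G, P t + ∑ t ∈ s ∩ Gᶜ, P t = ∑ t ∈ s, P t := by
    intro s
    have hs : s ∩ Gᶜ = s \ G := by
      ext x
      simp [Finset.mem_sdiff, Finset.mem_compl, Finset.mem_inter]
    rw [hs]
    exact Finset.sum_inter_add_sum_sdiff s G P
  have h1 := hsplit Ghatᶜ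
  have h2 := hsplit Ghat
  have h3 : ∑ t ∈ Ghatᶜ, P t + ∑ t ∈ Ghat, P t = 1 :=
    (Finset.sum_compl_add_sum Ghat P).trans hP1
  have hsum : a + b + c + d = 1 := by
    simp only [← ha_def, ← hb_def, ← hc_def, ← hd_def] at h1 h2
    linarith
  have hbc : b + c ≤ ε₁ := hmis
  -- abbreviations
  set r := Real.exp (δ - δhat) with hr_def
  have hδ1 : -ε₂ ≤ δ - δhat := (abs_le.mp hδδ).1
  have hδ2 : δ - δhat ≤ ε₂ := (abs_le.mp hδδ).2
  have hr_pos : 0 < r := Real.exp_pos _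
  have hr1 : Real.exp (-ε₂) ≤ r := Real.exp_le_exp.mpr hδ1
  have hr2 : r ≤ Real.exp ε₂ := Real.exp_le_exp.mpr hδ2
  have hexp_neg_le_one : Real.exp (-ε₂) ≤ 1 := by
    calc Real.exp (-ε₂) ≤ Real.exp 0 := Real.exp_le_exp.mpr (by linarith)
    _ = 1 := Real.exp_zero
  have hone_le_exp : 1 ≤ Real.exp ε₂ := by
    calc (1:ℝ) = Real.exp 0 := Real.exp_zero.symm
    _ ≤ Real.exp ε₂ := Real.exp_le_exp.mpr hε₂0
  have hε₁pos : 0 < 1 - ε₁ := by linarith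
  -- Lower bound on A
  have hAl : Real.exp (-ε₂) * (1 - ε₁) ≤ A := by
    have p1 : Real.exp (-ε₂) * d ≤ r * d := mul_le_mul_of_nonneg_right hr1 hd0
    have p2 : Real.exp (-ε₂) * a ≤ 1 * a := mul_le_mul_of_nonneg_right hexp_neg_le_one ha0
    have p3 : Real.exp (-ε₂) * (1 - ε₁) ≤ Real.exp (-ε₂) * (a + d) :=
      mul_le_mul_of_nonneg_left (by linarith) (Real.exp_pos _).le
    rw [mul_add] at p3
    have p4 : 0 ≤ Real.exp δ * b := mul_nonneg (Real.exp_pos _).le hb0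
    have p5 : 0 ≤ Real.exp (-δhat) * c := mul_nonneg (Real.exp_pos _).le hc0
    rw [hA]
    linarith
  -- common upper bound quantity
  have hQW : Real.exp ε₂ * (a + d) + Real.exp (δ + ε₂) * (b + c)
      ≤ Real.exp ε₂ * (1 - ε₁) + Real.exp (δ + ε₂) * ε₁ := by
    have hge : Real.exp ε₂ ≤ Real.exp (δ + ε₂) := Real.exp_le_exp.mpr (by linarith)
    nlinarith [mul_nonneg (sub_nonneg.mpr hbc) (sub_nonneg.mpr hge)]
  -- A ≤ exp ε₂ (a+d) + exp(δ+ε₂)(b+c)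
  have hAu : A ≤ Real.exp ε₂ * (a + d) + Real.exp (δ + ε₂) * (b + c) := by
    have p1 : a ≤ Real.exp ε₂ * a := by nlinarith
    have p2 : Real.exp δ * b ≤ Real.exp (δ + ε₂) * b :=
      mul_le_mul_of_nonneg_right (Real.exp_le_exp.mpr (by linarith)) hb0
    have p3 : Real.exp (-δhat) * c ≤ Real.exp (δ + ε₂) * c :=
      mul_le_mul_of_nonneg_right (Real.exp_le_exp.mpr (by linarith)) hc0
    have p4 : r * d ≤ Real.exp ε₂ * d := mul_le_mul_of_nonneg_right hr2 hd0
    rw [hA, mul_add, mul_add]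
    linarith
  -- A ≤ r * (exp ε₂ (a+d) + exp(δ+ε₂)(b+c))
  have hAur : A ≤ r * (Real.exp ε₂ * (a + d) + Real.exp (δ + ε₂) * (b + c)) := by
    have k1 : r * Real.exp ε₂ = Real.exp (δ - δhat + ε₂) := (Real.exp_add _ _).symm
    have k2 : r * Real.exp (δ + ε₂) = Real.exp (δ - δhat + (δ + ε₂)) := (Real.exp_add _ _).symm
    have p1 : a ≤ Real.exp (δ - δhat + ε₂) * a := by
      have : (1:ℝ) ≤ Real.exp (δ - δhat + ε₂) := by
        calc (1:ℝ) = Real.exp 0 := Real.exp_zero.symm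
        _ ≤ _ := Real.exp_le_exp.mpr (by linarith)
      nlinarith
    have p2 : Real.exp δ * b ≤ Real.exp (δ - δhat + (δ + ε₂)) * b :=
      mul_le_mul_of_nonneg_right (Real.exp_le_exp.mpr (by linarith)) hb0
    have p3 : Real.exp (-δhat) * c ≤ Real.exp (δ - δhat + (δ + ε₂)) * c :=
      mul_le_mul_of_nonneg_right (Real.exp_le_exp.mpr (by linarith)) hc0
    have p4 : r * d ≤ Real.exp (δ - δhat + ε₂) * d := by
      have : r ≤ Real.exp (δ - δhat + ε₂) := Real.exp_le_exp.mpr (by linarith)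
      exact mul_le_mul_of_nonneg_right this hd0
    calc A = a + Real.exp δ * b + Real.exp (-δhat) * c + r * d := hA
    _ ≤ Real.exp (δ - δhat + ε₂) * a + Real.exp (δ - δhat + (δ + ε₂)) * b
        + Real.exp (δ - δhat + (δ + ε₂)) * c + Real.exp (δ - δhat + ε₂) * d := by
        linarith
    _ = r * (Real.exp ε₂ * (a + d) + Real.exp (δ + ε₂) * (b + c)) := by
        rw [← k1, ← k2]; ring
  -- L and U
  set M := (1 - ε₁) + ε₁ * Real.exp (δ - ε₂) with hM_def
  have hM_pos : 0 < M := by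
    have : 0 ≤ ε₁ * Real.exp (δ - ε₂) := mul_nonneg hε₁0 (Real.exp_pos _).le
    simp only [hM_def]; linarith
  set L := Real.exp (-(2 * ε₂)) * (1 - ε₁) with hL_def
  set U := Real.exp (2 * ε₂) * M with hU_def
  have hL_pos : 0 < L := mul_pos (Real.exp_pos _) hε₁pos
  have hU_eq : U = Real.exp (2 * ε₂) * (1 - ε₁) + Real.exp (δ + ε₂) * ε₁ := by
    have : Real.exp (2 * ε₂) * Real.exp (δ - ε₂) = Real.exp (δ + ε₂) := by
      rw [← Real.exp_add, show 2 * ε₂ + (δ - ε₂) = δ + ε₂ by ring]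
    simp only [hU_def, hM_def]
    rw [mul_add, mul_comm ε₁ (Real.exp (δ - ε₂)), ← mul_assoc, this]
  have hexp12 : Real.exp ε₂ ≤ Real.exp (2 * ε₂) := Real.exp_le_exp.mpr (by linarith)
  have hWU : Real.exp ε₂ * (1 - ε₁) + Real.exp (δ + ε₂) * ε₁ ≤ U := by
    rw [hU_eq]
    nlinarith
  -- bound chain for A
  have hLA : L ≤ A := by
    have : Real.exp (-(2 * ε₂)) ≤ Real.exp (-ε₂) := Real.exp_le_exp.mpr (by linarith)
    calc L ≤ Real.exp (-ε₂) * (1 - ε₁) := mul_le_mul_of_nonneg_right this hε₁pos.le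
    _ ≤ A := hAl
  have hAU : A ≤ U := le_trans hAu (le_trans hQW hWU)
  have hrLA : r * L ≤ A := by
    have h1 : r * L ≤ Real.exp ε₂ * L := mul_le_mul_of_nonneg_right hr2 hL_pos.le
    have h2 : Real.exp ε₂ * L = Real.exp (-ε₂) * (1 - ε₁) := by
      simp only [hL_def]
      rw [← mul_assoc, ← Real.exp_add, show ε₂ + -(2 * ε₂) = -ε₂ by ring]
    linarith
  have hArU : A ≤ r * U := by
    calc A ≤ r * (Real.exp ε₂ * (a + d) + Real.exp (δ + ε₂) * (b + c)) := hAur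
    _ ≤ r * U := mul_le_mul_of_nonneg_left (le_trans hQW hWU) hr_pos.le
  -- apply aux lemma
  have key1 : |1 / A - 1| ≤ max (1 / L - 1) (1 - 1 / U) :=
    aux_one_div_bound A L U hL_pos hLA hAU
  have key2 : |r / A - 1| ≤ max (1 / L - 1) (1 - 1 / U) := by
    have hB1 : L ≤ A / r := (le_div_iff₀ hr_pos).mpr (by linarith [hrLA])
    have hB2 : A / r ≤ U := (div_le_iff₀ hr_pos).mpr (by linarith [hArU])
    have := aux_one_div_bound (A / r) L U hL_pos hB1 hB2
    rwa [one_div_div] at this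
  -- identify the RHS
  have eL : 1 / L - 1 = Real.exp (2 * ε₂) / (1 - ε₁) - 1 := by
    have hne : (1 - ε₁) ≠ 0 := ne_of_gt hε₁pos
    have hexp_ne : Real.exp (2 * ε₂) ≠ 0 := (Real.exp_pos _).ne'
    simp only [hL_def, Real.exp_neg]
    field_simp
  have eU : 1 - 1 / U = 1 - Real.exp (-(2 * ε₂)) / M := by
    have hexp_ne : Real.exp (2 * ε₂) ≠ 0 := (Real.exp_pos _).ne'
    have hMne : M ≠ 0 := ne_of_gt hM_pos
    simp only [hU_def, Real.exp_neg]
    field_simp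
  have final : max |1 / A - 1| |r / A - 1| ≤ max (1 / L - 1) (1 - 1 / U) :=
    max_le key1 key2
  rw [eL, eU] at final
  exact final
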